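/- arXiv:1912.03111 — 3 statements merged into one kernel-verified Lean document; each statement's English description precedes it below -/
import Mathlib

section
/- Let a, b, c, m, c0, s0, f0, w0 be real numbers with a·s0 + b·w0 < f0 ≤ m·s0. Set den := b·w0 − s0·(m−a), a' := (m·b·w0 − f0·(m−a))/den, b' := (b·f0 − m·b·s0)/den, λ := (f0 − m·s0)/den, μ := (a·s0 + b·w0 − f0)/den, and c' := λ·c + μ·c0. Then for all real numbers s, f, w with f ≤ a·s + b·w + c and f ≤ m·s + c0, one has f ≤ a'·s + b'·w + c'. -/
noncomputable def den (a b m s0 w0 : ℝ) : ℝ := b * w0 - s0 * (m - a)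

noncomputable def aPrime (a b m s0 f0 w0 : ℝ) : ℝ :=
  (m * b * w0 - f0 * (m - a)) / den a b m s0 w0

noncomputable def bPrime (a b m s0 f0 w0 : ℝ) : ℝ :=
  (b * f0 - m * b * s0) / den a b m s0 w0

noncomputable def lam (a b m s0 f0 w0 : ℝ) : ℝ :=
  (f0 - m * s0) / den a b m s0 w0

noncomputable def mu (a b m s0 f0 w0 : ℝ) : ℝ :=
  (a * s0 + b * w0 - f0) / den a b m s0 w0

noncomputable def cPrime (a b c m c0 s0 f0 w0 : ℝ) : ℝ :=
  lam a b m s0 f0 w0 * c + mu a b m s0 f0 w0 * c0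

/-- if `a·s0 + b·w0 < f0 ≤ m·s0`, then every `(s, f, w)` lying
below both planes `f = a·s + b·w + c` and `f = m·s + c0` also lies below the
new plane `f = a'·s + b'·w + c'`. -/
theorem below_both_planes_implies_below_new_plane
    (a b c m c0 s0 f0 w0 : ℝ)
    (h1 : a * s0 + b * w0 < f0) (h2 : f0 ≤ m * s0) :
    ∀ s f w : ℝ, f ≤ a * s + b * w + c → f ≤ m * s + c0 →
      f ≤ aPrime a b m s0 f0 w0 * s + bPrime a b m s0 f0 w0 * w +
        cPrime a b c m c0 s0 f0 w0 := by
  intro s f w hp1 hp2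
  have hden : den a b m s0 w0 < 0 := by
    unfold den; nlinarith
  have hden' : den a b m s0 w0 ≠ 0 := ne_of_lt hden
  have hlam : 0 ≤ lam a b m s0 f0 w0 := by
    unfold lam
    exact div_nonneg_of_nonpos (by linarith) (le_of_lt hden)
  have hmu : 0 ≤ mu a b m s0 f0 w0 := by
    unfold mu
    exact div_nonneg_of_nonpos (by linarith) (le_of_lt hden)
  have hsum : lam a b m s0 f0 w0 + mu a b m s0 f0 w0 = 1 := by
    unfold lam mu
    rw [← add_div]
    rw [show f0 - m * s0 + (a * s0 + b * w0 - f0) = den a b m s0 w0 by unfold den; ring]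
    exact div_self hden'
  have ha : aPrime a b m s0 f0 w0 = lam a b m s0 f0 w0 * a + mu a b m s0 f0 w0 * m := by
    unfold aPrime lam mu; field_simp; ring
  have hb : bPrime a b m s0 f0 w0 = lam a b m s0 f0 w0 * b := by
    unfold bPrime lam; field_simp
  rw [ha, hb]; unfold cPrime
  have e1 := mul_le_mul_of_nonneg_left hp1 hlam
  have e2 := mul_le_mul_of_nonneg_left hp2 hmu
  have key : f ≤ lam a b m s0 f0 w0 * (a * s + b * w + c)
      + mu a b m s0 f0 w0 * (m * s + c0) := by
    calc f = (lam a b m s0 f0 w0 + mu a b m s0 f0 w0) * f := by rw [hsum]; ring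
    _ = lam a b m s0 f0 w0 * f + mu a b m s0 f0 w0 * f := by ring
    _ ≤ _ := add_le_add e1 e2
  linarith [key]
end

section
/- Fix d0 = (s0, f0, w0) ∈ ℤ³ with s0, f0, w0 all positive, and let M be a ℤ³-graded 𝔽₂[X]-module with X of degree d0. Let a, b, c, m, c0 be real numbers with f0 ≤ m·s0, and suppose M is generated as an 𝔽₂[X]-module by homogeneous elements each of whose degrees (s,f,w) satisfies both f ≤ a·s + b·w + c and f ≤ m·s + c0. If X^n·M = 0 for some n ≥ 1, then M_{(s,f,w)} = 0 for every (s,f,w) with f > a·s + b·w + c + (n−1)·max(0, f0 − a·s0 − b·w0), and M_{(s,f,w)} = 0 for every (s,f,w) with f > m·s + c0. -/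
/-- 'β acts nilpotently' branch of case (1) of Theorem 4.7: let
`M` be a `ℤ³`-graded `𝔽₂[X]`-module with `X` of degree `d0 = (s0,f0,w0)`,
`s0,f0,w0 > 0`, generated by homogeneous elements whose degrees lie below the
planes `f = a·s + b·w + c` and `f = m·s + c0`, with `f0 ≤ m·s0`.  If
`X^n · M = 0` for some `n ≥ 1`, then `M_{(s,f,w)} = 0` whenever
`f > a·s + b·w + c + (n−1)·max(0, f0 − a·s0 − b·w0)`, and whenever
`f > m·s + c0`. -/
theorem graded_module_vanishing_nilpotent
    (s0 f0 w0 : ℤ) (hs0 : 0 < s0) (hf0 : 0 < f0) (hw0 : 0 < w0)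
    (M : Type) [AddCommGroup M] [Module (Polynomial (ZMod 2)) M]
    (𝒜 : ℤ × ℤ × ℤ → AddSubgroup M)
    (hdecomp : DirectSum.IsInternal 𝒜)
    (hX : ∀ (d : ℤ × ℤ × ℤ) (x : M), x ∈ 𝒜 d →
      (Polynomial.X : Polynomial (ZMod 2)) • x ∈ 𝒜 (d.1 + s0, d.2.1 + f0, d.2.2 + w0))
    (a b c m c0 : ℝ) (h2 : (f0 : ℝ) ≤ m * s0)
    (hgen : Submodule.span (Polynomial (ZMod 2))
      {x : M | ∃ s f w : ℤ, x ∈ 𝒜 (s, f, w) ∧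
        (f : ℝ) ≤ a * s + b * w + c ∧ (f : ℝ) ≤ m * s + c0} = ⊤)
    (n : ℕ) (hn : 1 ≤ n)
    (hnil : ∀ x : M, (Polynomial.X ^ n : Polynomial (ZMod 2)) • x = 0) :
    (∀ s f w : ℤ,
        (f : ℝ) > a * s + b * w + c +
          ((n : ℝ) - 1) * max 0 ((f0 : ℝ) - a * s0 - b * w0) →
        𝒜 (s, f, w) = ⊥) ∧
      (∀ s f w : ℤ, (f : ℝ) > m * s + c0 → 𝒜 (s, f, w) = ⊥) := by
  classical
  set R := Polynomial (ZMod 2) with hR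
  set S : Set M := {x : M | ∃ s f w : ℤ, x ∈ 𝒜 (s, f, w) ∧
        (f : ℝ) ≤ a * s + b * w + c ∧ (f : ℝ) ≤ m * s + c0} with hS
  -- degree of X^k • g
  have hXpow : ∀ (k : ℕ) (s f w : ℤ) (g : M), g ∈ 𝒜 (s, f, w) →
      ((Polynomial.X : R) ^ k) • g ∈ 𝒜 (s + k * s0, f + k * f0, w + k * w0) := by
    intro k
    induction k with
    | zero => intro s f w g hg; simpa using hg
    | succ k ih =>
      intro s f w g hg
      have h1 := hX _ _ (ih s f w g hg)
      have hsm : ((Polynomial.X : R) ^ (k+1)) • g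
          = (Polynomial.X : R) • (((Polynomial.X : R) ^ k) • g) := by
        rw [smul_smul, ← pow_succ']
      rw [hsm]
      have e : ((s + (k:ℤ) * s0 + s0 : ℤ), (f + (k:ℤ) * f0 + f0 : ℤ), (w + (k:ℤ) * w0 + w0 : ℤ))
          = ((s + ((k:ℕ)+1 : ℕ) * s0 : ℤ), (f + ((k:ℕ)+1 : ℕ) * f0 : ℤ),
             (w + ((k:ℕ)+1 : ℕ) * w0 : ℤ)) := by
        simp only [Prod.mk.injEq]
        push_cast
        refine ⟨by ring, by ring, by ring⟩
      exact e ▸ h1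
  -- X^k kills everything for k ≥ n
  have hzero : ∀ (k : ℕ), n ≤ k → ∀ g : M, ((Polynomial.X : R) ^ k) • g = 0 := by
    intro k hk g
    have e : ((Polynomial.X : R) ^ k) = (Polynomial.X : R) ^ (k - n) * (Polynomial.X : R) ^ n := by
      rw [← pow_add]; congr 1; omega
    rw [e, mul_smul, hnil, smul_zero]
  set T : Set M := {y : M | ∃ k : ℕ, k < n ∧ ∃ x, x ∈ S ∧ y = ((Polynomial.X : R) ^ k) • x}
    with hT
  -- polynomial multiples of generators lie in the closure of T
  have key1 : ∀ x : ZMod 2, x ≠ 0 → x = 1 := by decide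
  have hpsmul : ∀ (p : R) (g : M), g ∈ S → p • g ∈ AddSubgroup.closure T := by
    intro p g hg
    have hp : p = ∑ i ∈ p.support, (Polynomial.X : R) ^ i := by
      conv_lhs => rw [Polynomial.as_sum_support p]
      refine Finset.sum_congr rfl fun i hi => ?_
      rw [key1 _ (Polynomial.mem_support_iff.mp hi)]
      exact (Polynomial.X_pow_eq_monomial i).symm
    rw [hp, Finset.sum_smul]
    refine AddSubgroup.sum_mem _ fun i _ => ?_
    by_cases hi : i < n
    · exact AddSubgroup.subset_closure ⟨i, hi, g, hg, rfl⟩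
    · rw [hzero i (by omega) g]; exact (AddSubgroup.closure T).zero_mem
  have hsmul : ∀ (r : R) (y : M), y ∈ AddSubgroup.closure T → r • y ∈ AddSubgroup.closure T := by
    intro r y hy
    induction hy using AddSubgroup.closure_induction with
    | mem z hz =>
      obtain ⟨k, hk, g, hg, rfl⟩ := hz
      rw [smul_smul]
      exact hpsmul _ g hg
    | zero => rw [smul_zero]; exact (AddSubgroup.closure T).zero_mem
    | add y z _ _ ihy ihz => rw [smul_add]; exact (AddSubgroup.closure T).add_mem ihy ihz
    | neg y _ ihy => rw [smul_neg]; exact (AddSubgroup.closure T).neg_mem ihy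
  have hTtop : ∀ x : M, x ∈ AddSubgroup.closure T := by
    intro x
    have hx : x ∈ Submodule.span R S := by rw [hgen]; trivial
    refine Submodule.span_induction ?_ ?_ ?_ ?_ hx
    · intro g hg
      have := hpsmul 1 g hg
      rwa [one_smul] at this
    · exact (AddSubgroup.closure T).zero_mem
    · intro y z _ _ ihy ihz; exact (AddSubgroup.closure T).add_mem ihy ihz
    · intro r y _ ihy; exact hsmul r y ihy
  letI := hdecomp.chooseDecomposition
  have key : ∀ d : ℤ × ℤ × ℤ,
      (∀ (k : ℕ), k < n → ∀ s' f' w' : ℤ,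
        ((f' : ℝ) ≤ a * s' + b * w' + c) → ((f' : ℝ) ≤ m * s' + c0) →
        ((s' + (k:ℤ) * s0, f' + (k:ℤ) * f0, w' + (k:ℤ) * w0) : ℤ × ℤ × ℤ) ≠ d) →
      𝒜 d = ⊥ := by
    intro d hd
    rw [AddSubgroup.eq_bot_iff_forall]
    intro x hx
    have hφ : ∀ y : M, y ∈ AddSubgroup.closure T → ((DirectSum.decompose 𝒜 y) d : M) = 0 := by
      intro y hy
      induction hy using AddSubgroup.closure_induction with
      | mem z hz =>
        obtain ⟨k, hk, g, hg, rfl⟩ := hz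
        obtain ⟨s', f', w', hgmem, hb1, hb2⟩ := hg
        have hmem := hXpow k s' f' w' g hgmem
        have hne := hd k hk s' f' w' hb1 hb2
        rw [DirectSum.decompose_of_mem_ne 𝒜 hmem hne]
      | zero => simp
      | add y z _ _ ihy ihz => rw [DirectSum.decompose_add]; simp [ihy, ihz]
      | neg y _ ihy =>
        rw [DirectSum.decompose_neg, DFinsupp.neg_apply]
        simp [ihy]
    have hsame : ((DirectSum.decompose 𝒜 x) d : M) = x :=
      DirectSum.decompose_of_mem_same 𝒜 hx
    rw [← hsame]
    exact hφ x (hTtop x)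
  constructor
  · intro s f w hf
    refine key (s, f, w) ?_
    intro k hk s' f' w' hb1 hb2 heq
    simp only [Prod.mk.injEq] at heq
    obtain ⟨e1, e2, e3⟩ := heq
    have es : (s' : ℝ) + (k : ℝ) * s0 = s := by exact_mod_cast congrArg (Int.cast : ℤ → ℝ) e1
    have ef : (f' : ℝ) + (k : ℝ) * f0 = f := by exact_mod_cast congrArg (Int.cast : ℤ → ℝ) e2
    have ew : (w' : ℝ) + (k : ℝ) * w0 = w := by exact_mod_cast congrArg (Int.cast : ℤ → ℝ) e3
    have hk' : (k : ℝ) ≤ (n : ℝ) - 1 := by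
      have : (k : ℝ) + 1 ≤ n := by exact_mod_cast hk
      linarith
    have hk0 : (0 : ℝ) ≤ (k : ℝ) := Nat.cast_nonneg k
    have hM0 : (0:ℝ) ≤ max 0 ((f0:ℝ) - a*s0 - b*w0) := le_max_left _ _
    have hM1 : (f0:ℝ) - a*s0 - b*w0 ≤ max 0 ((f0:ℝ) - a*s0 - b*w0) := le_max_right _ _
    have t1 : (k:ℝ) * ((f0:ℝ) - a*s0 - b*w0) ≤ (k:ℝ) * max 0 ((f0:ℝ) - a*s0 - b*w0) :=
      mul_le_mul_of_nonneg_left hM1 hk0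
    have t2 : (k:ℝ) * max 0 ((f0:ℝ) - a*s0 - b*w0) ≤ ((n:ℝ) - 1) * max 0 ((f0:ℝ) - a*s0 - b*w0) :=
      mul_le_mul_of_nonneg_right hk' hM0
    have h1 : a * (s:ℝ) = a * s' + a * ((k:ℝ) * s0) := by rw [← es]; ring
    have h3 : b * (w:ℝ) = b * w' + b * ((k:ℝ) * w0) := by rw [← ew]; ring
    linarith
  · intro s f w hf
    refine key (s, f, w) ?_
    intro k hk s' f' w' hb1 hb2 heq
    simp only [Prod.mk.injEq] at heq
    obtain ⟨e1, e2, e3⟩ := heq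
    have es : (s' : ℝ) + (k : ℝ) * s0 = s := by exact_mod_cast congrArg (Int.cast : ℤ → ℝ) e1
    have ef : (f' : ℝ) + (k : ℝ) * f0 = f := by exact_mod_cast congrArg (Int.cast : ℤ → ℝ) e2
    have hk0 : (0 : ℝ) ≤ (k : ℝ) := Nat.cast_nonneg k
    have t1 : (k:ℝ) * (f0:ℝ) ≤ (k:ℝ) * (m * s0) := mul_le_mul_of_nonneg_left h2 hk0
    have h1 : m * (s:ℝ) = m * s' + m * ((k:ℝ) * s0) := by rw [← es]; ring
    linarith
end

section
/- Fix d0 = (s0, f0, w0) ∈ ℤ³ with s0, f0, w0 all positive, and let M be a ℤ³-graded 𝔽₂[X]-module with X of degree d0. Let a, b, c, m, c0 be real numbers with a·s0 + b·w0 < f0 ≤ m·s0 (so den := b·w0 − s0·(m−a) < 0), and set a' := (m·b·w0 − f0·(m−a))/den, b' := (b·f0 − m·b·s0)/den, λ := (f0 − m·s0)/den, μ := (a·s0 + b·w0 − f0)/den, and c' := λ·c + μ·c0. Suppose M is generated as an 𝔽₂[X]-module by homogeneous elements each of whose degrees (s,f,w) satisfies both f ≤ a·s + b·w + c and f ≤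 m·s + c0. Then M_{(s,f,w)} = 0 for every (s,f,w) with f > a'·s + b'·w + c', and M_{(s,f,w)} = 0 for every (s,f,w) with f > m·s + c0. -/
/-- case (2) of Theorem 4.7, module-theoretic content: let `M` be
a `ℤ³`-graded `𝔽₂[X]`-module with `X` of degree `d0 = (s0,f0,w0)`,
`s0,f0,w0 > 0`, generated by homogeneous elements whose degrees lie below the
planes `f = a·s + b·w + c` and `f = m·s + c0`, where `a·s0 + b·w0 < f0 ≤ m·s0`.
Then `M_{(s,f,w)} = 0` whenever `f > a'·s + b'·w + c'`, and whenever
`f > m·s + c0`. -/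
theorem graded_module_vanishing_new_plane
    (s0 f0 w0 : ℤ) (hs0 : 0 < s0) (hf0 : 0 < f0) (hw0 : 0 < w0)
    (M : Type) [AddCommGroup M] [Module (Polynomial (ZMod 2)) M]
    (𝒜 : ℤ × ℤ × ℤ → AddSubgroup M)
    (hdecomp : DirectSum.IsInternal 𝒜)
    (hX : ∀ (d : ℤ × ℤ × ℤ) (x : M), x ∈ 𝒜 d →
      (Polynomial.X : Polynomial (ZMod 2)) • x ∈ 𝒜 (d.1 + s0, d.2.1 + f0, d.2.2 + w0))
    (a b c m c0 : ℝ)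
    (h1 : a * s0 + b * w0 < (f0 : ℝ)) (h2 : (f0 : ℝ) ≤ m * s0)
    (hgen : Submodule.span (Polynomial (ZMod 2))
      {x : M | ∃ s f w : ℤ, x ∈ 𝒜 (s, f, w) ∧
        (f : ℝ) ≤ a * s + b * w + c ∧ (f : ℝ) ≤ m * s + c0} = ⊤) :
    (∀ s f w : ℤ,
        (f : ℝ) > aPrime a b m s0 f0 w0 * s + bPrime a b m s0 f0 w0 * w +
          cPrime a b c m c0 s0 f0 w0 →
        𝒜 (s, f, w) = ⊥) ∧
      (∀ s f w : ℤ, (f : ℝ) > m * s + c0 → 𝒜 (s, f, w) = ⊥) := by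
  -- Real-number facts
  have hden : den a b m s0 w0 < 0 := by
    unfold den; nlinarith
  have hdne : den a b m s0 w0 ≠ 0 := ne_of_lt hden
  have hlam : 0 ≤ lam a b m s0 f0 w0 := by
    unfold lam
    rw [div_nonneg_iff]; right; constructor <;> linarith
  have hmu : 0 ≤ mu a b m s0 f0 w0 := by
    unfold mu
    rw [div_nonneg_iff]; right; constructor <;> linarith
  have hsum : lam a b m s0 f0 w0 + mu a b m s0 f0 w0 = 1 := by
    unfold lam mu
    rw [← add_div, div_eq_one_iff_eq hdne]
    unfold den; ring
  have haP : aPrime a b m s0 f0 w0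
      = lam a b m s0 f0 w0 * a + mu a b m s0 f0 w0 * m := by
    unfold aPrime lam mu; field_simp; ring
  have hbP : bPrime a b m s0 f0 w0 = lam a b m s0 f0 w0 * b := by
    unfold bPrime lam; field_simp
  have hkey : aPrime a b m s0 f0 w0 * s0 + bPrime a b m s0 f0 w0 * w0 = (f0 : ℝ) := by
    unfold aPrime bPrime
    rw [div_mul_eq_mul_div, div_mul_eq_mul_div, ← add_div, div_eq_iff hdne]
    unfold den; ring
  set A' := aPrime a b m s0 f0 w0
  set B' := bPrime a b m s0 f0 w0
  set C' := cPrime a b c m c0 s0 f0 w0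
  have hC' : C' = lam a b m s0 f0 w0 * c + mu a b m s0 f0 w0 * c0 := rfl
  -- "Good" degrees
  set Good : ℤ × ℤ × ℤ → Prop := fun d =>
    (d.2.1 : ℝ) ≤ A' * d.1 + B' * d.2.2 + C' ∧ (d.2.1 : ℝ) ≤ m * d.1 + c0 with hGoodDef
  -- good degrees are closed under shifting by d0
  have hshift : ∀ d : ℤ × ℤ × ℤ, Good d → Good (d.1 + s0, d.2.1 + f0, d.2.2 + w0) := by
    rintro ⟨s, f, w⟩ ⟨hg1, hg2⟩
    constructor
    · simp only [hGoodDef] at hg1 ⊢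
      push_cast
      push_cast at hg1
      nlinarith [hkey]
    · simp only [hGoodDef] at hg2 ⊢
      push_cast
      push_cast at hg2
      nlinarith
  -- generators are good
  have hgengood : ∀ s f w : ℤ, (f : ℝ) ≤ a * s + b * w + c → (f : ℝ) ≤ m * s + c0 →
      Good (s, f, w) := by
    intro s f w hfa hfm
    constructor
    · simp only [hGoodDef]
      have e1 : lam a b m s0 f0 w0 * (f : ℝ) ≤ lam a b m s0 f0 w0 * (a * s + b * w + c) :=
        mul_le_mul_of_nonneg_left hfa hlam
      have e2 : mu a b m s0 f0 w0 * (f : ℝ) ≤ mu a b m s0 f0 w0 * (m * s + c0) :=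
        mul_le_mul_of_nonneg_left hfm hmu
      have : (f : ℝ) = lam a b m s0 f0 w0 * f + mu a b m s0 f0 w0 * f := by
        rw [← add_mul, hsum, one_mul]
      rw [this, haP, hbP, hC']
      nlinarith
    · exact hfm
  -- the subgroup generated by good pieces
  set S : AddSubgroup M := ⨆ (d : ℤ × ℤ × ℤ) (_ : Good d), 𝒜 d with hSdef
  have hmemS : ∀ d : ℤ × ℤ × ℤ, Good d → 𝒜 d ≤ S := fun d hd =>
    le_iSup₂ (f := fun (d : ℤ × ℤ × ℤ) (_ : Good d) => 𝒜 d) d hd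
  -- S is closed under scalar multiplication by X
  have hXS : ∀ x ∈ S, (Polynomial.X : Polynomial (ZMod 2)) • x ∈ S := by
    have : S ≤ AddSubgroup.comap
        (DistribMulAction.toAddMonoidHom M (Polynomial.X : Polynomial (ZMod 2))) S := by
      refine iSup₂_le fun d hd => ?_
      intro x hx
      exact hmemS _ (hshift d hd) (hX d x hx)
    exact fun x hx => this hx
  -- S is closed under scalar multiplication by any polynomial
  have hpS : ∀ (p : Polynomial (ZMod 2)), ∀ x ∈ S, p • x ∈ S := by
    intro p
    induction p using Polynomial.induction_on with
    | C r =>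
      intro x hx
      rcases (show r = 0 ∨ r = 1 by revert r; decide) with h | h
      · subst h; simp only [map_zero, zero_smul]; exact zero_mem S
      · subst h; simp only [map_one, one_smul]; exact hx
    | add p q hp hq =>
      intro x hx
      rw [add_smul]
      exact add_mem (hp x hx) (hq x hx)
    | monomial n r ih =>
      intro x hx
      have : (Polynomial.C r * Polynomial.X ^ (n + 1)) • x
          = (Polynomial.C r * Polynomial.X ^ n) • ((Polynomial.X : Polynomial (ZMod 2)) • x) := by
        rw [← mul_smul]; ring_nf
      rw [this]
      exact ih _ (hXS x hx)
  -- everything is in S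
  have hallS : ∀ x : M, x ∈ S := by
    intro x
    have hx : x ∈ Submodule.span (Polynomial (ZMod 2))
        {x : M | ∃ s f w : ℤ, x ∈ 𝒜 (s, f, w) ∧
          (f : ℝ) ≤ a * s + b * w + c ∧ (f : ℝ) ≤ m * s + c0} := by
      rw [hgen]; trivial
    refine Submodule.span_induction ?_ ?_ ?_ ?_ hx
    · rintro y ⟨s, f, w, hy, hfa, hfm⟩
      exact hmemS _ (hgengood s f w hfa hfm) hy
    · exact zero_mem S
    · exact fun y z _ _ hy hz => add_mem hy hz
    · exact fun p y _ hy => hpS p y hy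
  -- vanishing at bad degrees
  have hindep := hdecomp.addSubgroup_iSupIndep
  have hbad : ∀ d : ℤ × ℤ × ℤ, ¬ Good d → 𝒜 d = ⊥ := by
    intro d hd
    rw [eq_bot_iff]
    intro x hx
    have hx2 : x ∈ ⨆ (j) (_ : j ≠ d), 𝒜 j := by
      refine (iSup₂_le fun j hj => le_iSup₂ (f := fun (j : ℤ × ℤ × ℤ) (_ : j ≠ d) => 𝒜 j) j ?_)
        (hallS x)
      rintro rfl; exact hd hj
    exact (hindep d).le_bot ⟨hx, hx2⟩
  constructor
  · intro s f w hgt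
    refine hbad (s, f, w) fun hg => ?_
    exact absurd hg.1 (not_le.mpr hgt)
  · intro s f w hgt
    refine hbad (s, f, w) fun hg => ?_
    exact absurd hg.2 (not_le.mpr hgt)
end
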